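/- arXiv:2508.18201 — 2 statements merged into one kernel-verified Lean document; each statement's English description precedes it below -/
import Mathlib

section
/- Let $\Theta \subseteq \mathbb{R}$, and for each $\theta \in \Theta$ let $F_\theta$ be a continuous cumulative distribution function on $\mathbb{R}$ with connected support. Fix $n \ge 1$, levels $\gamma_k = k/(n+1)$ for $k=1,\ldots,n$, and let $h^{(\theta)} := \bigl(q^{(\theta)}(\gamma_1), \ldots, q^{(\theta)}(\gamma_n)\bigr) \in \mathbb{R}^n$ denote the vector of $\gamma_k$-quantiles of $F_\theta$. Let $J : \mathbb{R}^n \to \mathbb{R}^p$ be continuous, and let $\bar\beta \in \mathbb{R}^p$ satisfy $\bar\beta^\top J(h^{(\theta)}) = \theta$ for all $\theta \in \Theta$. Let $\theta_0 \in \Theta$, and let $y_1^{(0)}, y_2^{(0)}, \ldots$ be i.i.d. with cdf $F_{\theta_0}$, with $h_N(\boldsymbol{y}_N^{(0)}) := \bigl(y^{(0)}_{(\lfloor \gamma_1 N \rfloor)}, \ldots, y^{(0)}_{(\lfloor \gamma_n N \rfloor)}\bigr)$ the vector of sample quantiles of the first $N$ observations. Then the TS estimate $\bar\theta_0^{(N)}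 := \bar\beta^\top J\bigl(h_N(\boldsymbol{y}_N^{(0)})\bigr)$ converges almost surely to $\theta_0$ as $N \to \infty$ (strong consistency of the TS estimator). -/
open MeasureTheory ProbabilityTheory Filter Topology
open scoped Matrix

/-- `l`-th order statistic (1-indexed) of the first `N` values of `y`. -/
noncomputable def orderStat (N : ℕ) (y : ℕ → ℝ) (l : ℕ) : ℝ :=
  (List.insertionSort (· ≤ ·) (List.ofFn fun i : Fin N => y i)).getD (l - 1) 0

/-- The `γ`-quantile of a cdf `F`: `q(γ) = inf {x | F x ≥ γ}`. -/
noncomputable def quantile (F : ℝ → ℝ) (γ : ℝ) : ℝ := sInf {x | γ ≤ F x}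

/-- First-stage compression: vector of sample quantiles of `y 0, …, y (N-1)` at levels
`γ_k = (k+1)/(n+1)`, `k = 0, …, n-1` (0-indexed). -/
noncomputable def sampleQuantVec (n N : ℕ) (y : ℕ → ℝ) : Fin n → ℝ :=
  fun k => orderStat N y ⌊(((k : ℕ) + 1 : ℝ) / (n + 1)) * N⌋₊

/-- Vector of true quantiles `h^(θ) = (q^(θ)(γ_1), …, q^(θ)(γ_n))` of the cdf `F θ`. -/
noncomputable def quantVec (F : ℝ → ℝ → ℝ) (n : ℕ) (θ : ℝ) : Fin n → ℝ :=
  fun k => quantile (F θ) (((k : ℕ) + 1 : ℝ) / (n + 1))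

theorem TS.countP_ofFn (N : ℕ) (f : Fin N → ℝ) (p : ℝ → Bool) :
    (List.ofFn f).countP p = ∑ i : Fin N, if p (f i) then 1 else 0 := by
  induction N with
  | zero => simp
  | succ m ih =>
    rw [List.ofFn_succ, List.countP_cons, ih (fun i => f i.succ), Fin.sum_univ_succ]
    omega

theorem TS.sorted_getD_le_iff {s : List ℝ} (hs : s.Pairwise (· ≤ ·)) {i : ℕ}
    (hi : i < s.length) (x : ℝ) :
    s.getD i 0 ≤ x ↔ i + 1 ≤ s.countP (fun v => decide (v ≤ x)) := by
  rw [List.getD_eq_getElem _ _ hi]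
  constructor
  · intro h
    have htake : (s.take (i+1)).countP (fun v => decide (v ≤ x)) = i + 1 := by
      rw [List.countP_eq_length_filter, List.filter_eq_self.2, List.length_take]
      · omega
      · intro a ha
        rw [List.mem_iff_getElem] at ha
        obtain ⟨j, hj, rfl⟩ := ha
        simp only [List.length_take] at hj
        rw [List.getElem_take]
        have hji : j ≤ i := by omega
        rcases eq_or_lt_of_le hji with h' | h'
        · subst h'; simpa using h
        · have := List.pairwise_iff_getElem.1 hs j i (by omega) hi h'
          simpa using le_trans this h
    calc i + 1 = (s.take (i+1)).countP (fun v => decide (v ≤ x)) := htake.symm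
      _ ≤ s.countP (fun v => decide (v ≤ x)) :=
        (s.take_sublist (i+1)).countP_le
  · intro h
    by_contra hx
    push_neg at hx
    have hdrop : (s.drop i).countP (fun v => decide (v ≤ x)) = 0 := by
      rw [List.countP_eq_length_filter, List.length_eq_zero_iff, List.filter_eq_nil_iff]
      intro a ha
      rw [List.mem_iff_getElem] at ha
      obtain ⟨j, hj, rfl⟩ := ha
      rw [List.getElem_drop]
      simp only [List.length_drop] at hj
      have : s[i] ≤ s[i + j] := by
        rcases Nat.eq_zero_or_pos j with h' | h'
        · subst h'; simp
        · simpa using List.pairwise_iff_getElem.1 hs i (i+j) hi (by omega) (by omega)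
      simp only [decide_eq_true_eq, not_le]
      exact lt_of_lt_of_le hx this
    have hc : s.countP (fun v => decide (v ≤ x))
        = (s.take i).countP (fun v => decide (v ≤ x))
          + (s.drop i).countP (fun v => decide (v ≤ x)) := by
      conv_lhs => rw [← s.take_append_drop i]
      rw [List.countP_append]
    rw [hc, hdrop] at h
    have : (s.take i).countP (fun v => decide (v ≤ x)) ≤ i := by
      calc _ ≤ (s.take i).length := List.countP_le_length
        _ ≤ i := by simp [List.length_take]
    omega

theorem TS.orderStat_le_iff (N : ℕ) (y : ℕ → ℝ) {l : ℕ} (hl1 : 1 ≤ l) (hlN : l ≤ N) (x : ℝ) :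
    orderStat N y l ≤ x ↔
      l ≤ (List.ofFn fun i : Fin N => y i).countP (fun v => decide (v ≤ x)) := by
  unfold orderStat
  set L := List.ofFn fun i : Fin N => y i with hL
  have hperm : (List.insertionSort (· ≤ ·) L).Perm L := L.perm_insertionSort (· ≤ ·)
  have hsorted : (List.insertionSort (· ≤ ·) L).Pairwise (· ≤ ·) :=
    L.pairwise_insertionSort (· ≤ ·)
  have hlen : (List.insertionSort (· ≤ ·) L).length = N := by
    rw [hperm.length_eq, hL, List.length_ofFn]
  have hi : l - 1 < (List.insertionSort (· ≤ ·) L).length := by omega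
  rw [TS.sorted_getD_le_iff hsorted hi x, hperm.countP_eq]
  have : l - 1 + 1 = l := by omega
  rw [this]

theorem TS.empirical_tendsto {Ω : Type*} [MeasurableSpace Ω] (P : Measure Ω)
    [IsProbabilityMeasure P] (y : ℕ → Ω → ℝ) (hmeas : ∀ i, Measurable (y i))
    (hindep : iIndepFun y P)
    (G : ℝ → ℝ) (hcdf : ∀ i x, P {ω | y i ω ≤ x} = ENNReal.ofReal (G x)) (x : ℝ) :
    ∀ᵐ ω ∂P, Tendsto (fun N : ℕ =>
        ((List.ofFn fun i : Fin N => y i ω).countP (fun v => decide (v ≤ x)) : ℝ) / N)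
      atTop (𝓝 (max (G x) 0)) := by
  set g : ℝ → ℝ := (Set.Iic x).indicator (fun _ => (1:ℝ)) with hg_def
  have hg : Measurable g := measurable_const.indicator measurableSet_Iic
  set X : ℕ → Ω → ℝ := fun i => g ∘ y i with hX_def
  have hXite : ∀ i ω, X i ω = if y i ω ≤ x then (1:ℝ) else 0 := by
    intro i ω
    simp [hX_def, hg_def, Set.indicator_apply, Set.mem_Iic]
  have hXind : ∀ i, X i = (y i ⁻¹' Set.Iic x).indicator (fun _ => (1:ℝ)) := by
    intro i
    funext ω
    rw [hXite i ω]
    by_cases h : y i ω ≤ x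
    · rw [Set.indicator_of_mem (by simpa [Set.mem_Iic] using h)]
      simp [h]
    · rw [Set.indicator_of_notMem (by simpa [Set.mem_Iic] using h)]
      simp [h]
  have hsmeas : ∀ i, MeasurableSet (y i ⁻¹' Set.Iic x) := fun i =>
    (hmeas i) measurableSet_Iic
  have hint : Integrable (X 0) P := by
    rw [hXind 0]
    exact (integrable_const (1:ℝ)).indicator (hsmeas 0)
  have hindepX : Pairwise (Function.onFun (IndepFun · · P) X) := by
    intro i j hij
    exact (hindep.comp (fun _ => g) (fun _ => hg)).indepFun hij
  have hmap : ∀ i, Measure.map (y i) P = Measure.map (y 0) P := by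
    intro i
    haveI h1 : IsProbabilityMeasure (Measure.map (y i) P) :=
      Measure.isProbabilityMeasure_map (hmeas i).aemeasurable
    refine MeasureTheory.Measure.ext_of_Iic _ _ (fun a => ?_)
    rw [Measure.map_apply (hmeas i) measurableSet_Iic,
      Measure.map_apply (hmeas 0) measurableSet_Iic]
    have h2 : y i ⁻¹' Set.Iic a = {ω | y i ω ≤ a} := rfl
    have h3 : y 0 ⁻¹' Set.Iic a = {ω | y 0 ω ≤ a} := rfl
    rw [h2, h3, hcdf i a, hcdf 0 a]
  have hident : ∀ i, IdentDistrib (X i) (X 0) P P := fun i =>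
    (⟨(hmeas i).aemeasurable, (hmeas 0).aemeasurable, hmap i⟩ :
      IdentDistrib (y i) (y 0) P P).comp hg
  have hE : (∫ ω, X 0 ω ∂P) = max (G x) 0 := by
    rw [hXind 0]
    have h4 : ∫ ω, (y 0 ⁻¹' Set.Iic x).indicator (fun _ => (1:ℝ)) ω ∂P
        = (P (y 0 ⁻¹' Set.Iic x)).toReal := by
      exact integral_indicator_one (hsmeas 0)
    rw [h4]
    have h2 : y 0 ⁻¹' Set.Iic x = {ω | y 0 ω ≤ x} := rfl
    rw [h2, hcdf 0 x, ENNReal.toReal_ofReal']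
  have hslln := strong_law_ae_real X hint hindepX hident
  filter_upwards [hslln] with ω hω
  rw [hE] at hω
  convert hω using 2 with N
  rw [TS.countP_ofFn]
  push_cast
  congr 1
  rw [← Fin.sum_univ_eq_sum_range (fun i => X i ω) N]
  exact Finset.sum_congr rfl fun i _ => by simp [hXite]

/-- Strong consistency of the TS estimator: if `β̄ᵀ J(h^(θ)) = θ` for all `θ ∈ Θ`, the cdfs
`F θ` are continuous with connected support, and `y 0, y 1, …` are i.i.d. with cdf `F θ₀`
for some `θ₀ ∈ Θ`, then the TS estimate `β̄ᵀ J(h_N(y))` built from the sample quantiles of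
the first `N` observations converges almost surely to `θ₀`. -/
theorem ts_estimator_strongly_consistent
    {Ω : Type*} [MeasurableSpace Ω] (P : Measure Ω) [IsProbabilityMeasure P]
    (Θ : Set ℝ) (F : ℝ → ℝ → ℝ) {n p : ℕ} (hn : 1 ≤ n)
    (hcont : ∀ θ ∈ Θ, Continuous (F θ)) (hmono : ∀ θ ∈ Θ, Monotone (F θ))
    (hconn : ∀ θ ∈ Θ, ∀ γ ∈ Set.Ioo (0 : ℝ) 1, ∀ ε > 0,
      γ < F θ (quantile (F θ) γ + ε) ∧ F θ (quantile (F θ) γ - ε) < γ)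
    (J : (Fin n → ℝ) → Fin p → ℝ) (hJ : Continuous J)
    (βbar : Fin p → ℝ)
    (hident : ∀ θ ∈ Θ, βbar ⬝ᵥ J (quantVec F n θ) = θ)
    (θ0 : ℝ) (hθ0 : θ0 ∈ Θ)
    (y : ℕ → Ω → ℝ)
    (hmeas : ∀ i, Measurable (y i))
    (hindep : iIndepFun y P)
    (hcdf : ∀ i x, P {ω | y i ω ≤ x} = ENNReal.ofReal (F θ0 x)) :
    ∀ᵐ ω ∂P,
      Tendsto (fun N : ℕ => βbar ⬝ᵥ J (sampleQuantVec n N fun i => y i ω))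
        atTop (𝓝 θ0) := by
  classical
  set G : ℝ → ℝ := F θ0 with hG
  set γ : Fin n → ℝ := fun k => (((k : ℕ) : ℝ) + 1) / ((n : ℝ) + 1) with hγ
  have hγmem : ∀ k : Fin n, γ k ∈ Set.Ioo (0:ℝ) 1 := by
    intro k
    constructor
    · apply div_pos <;> positivity
    · rw [div_lt_one (by positivity)]
      have : ((k : ℕ) : ℝ) < (n : ℝ) := by exact_mod_cast k.isLt
      linarith
  set q : Fin n → ℝ := fun k => quantile G (γ k) with hq
  have hAE : ∀ᵐ ω ∂P, ∀ k : Fin n, ∀ m : ℕ,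
      Tendsto (fun N : ℕ =>
        ((List.ofFn fun i : Fin N => y i ω).countP
          (fun v => decide (v ≤ q k + 1/((m:ℝ)+1))) : ℝ) / N)
        atTop (𝓝 (max (G (q k + 1/((m:ℝ)+1))) 0)) ∧
      Tendsto (fun N : ℕ =>
        ((List.ofFn fun i : Fin N => y i ω).countP
          (fun v => decide (v ≤ q k - 1/((m:ℝ)+1))) : ℝ) / N)
        atTop (𝓝 (max (G (q k - 1/((m:ℝ)+1))) 0)) := by
    rw [ae_all_iff]
    intro k
    rw [ae_all_iff]
    intro m
    exact (TS.empirical_tendsto P y hmeas hindep G hcdf _).and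
      (TS.empirical_tendsto P y hmeas hindep G hcdf _)
  filter_upwards [hAE] with ω hω
  have hvec : Tendsto (fun N => sampleQuantVec n N fun i => y i ω) atTop
      (𝓝 (quantVec F n θ0)) := by
    rw [tendsto_pi_nhds]
    intro k
    have hqk : quantVec F n θ0 k = q k := rfl
    rw [hqk]
    rw [Metric.tendsto_nhds]
    intro ε hε
    obtain ⟨m, hm⟩ := exists_nat_one_div_lt hε
    set ε' : ℝ := 1/((m:ℝ)+1) with hε'def
    have hε'pos : 0 < ε' := by positivity
    obtain ⟨hup, hlo⟩ := hω k m
    obtain ⟨hFup, hFlo⟩ := hconn θ0 hθ0 (γ k) (hγmem k) ε' hε'pos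
    have ha : γ k < max (G (q k + ε')) 0 := lt_of_lt_of_le hFup (le_max_left _ _)
    have hb : max (G (q k - ε')) 0 < γ k := max_lt hFlo (hγmem k).1
    set δ : ℝ := (γ k - max (G (q k - ε')) 0)/2 with hδ
    have hδpos : 0 < δ := by rw [hδ]; linarith
    have E1 := hup.eventually (eventually_gt_nhds ha)
    have E2 := hlo.eventually (eventually_lt_nhds (show max (G (q k - ε')) 0 < γ k - δ by
      rw [hδ]; linarith))
    have E3 : ∀ᶠ N : ℕ in atTop, (1:ℝ) ≤ γ k * N :=
      (tendsto_natCast_atTop_atTop.const_mul_atTop (hγmem k).1).eventually_ge_atTop 1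
    have E4 : ∀ᶠ N : ℕ in atTop, (1:ℝ) ≤ δ * N :=
      (tendsto_natCast_atTop_atTop.const_mul_atTop hδpos).eventually_ge_atTop 1
    filter_upwards [E1, E2, E3, E4, eventually_ge_atTop 1] with N h1 h2 h3 h4 hN1
    have hNpos : (0:ℝ) < N := by exact_mod_cast hN1
    set l : ℕ := ⌊γ k * N⌋₊ with hl
    have hsq : sampleQuantVec n N (fun i => y i ω) k
        = orderStat N (fun i => y i ω) l := rfl
    have hl1 : 1 ≤ l := Nat.le_floor (by exact_mod_cast h3)
    have hlr : (l : ℝ) ≤ γ k * N := Nat.floor_le (by positivity)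
    have hlN : l ≤ N := by
      have h5 : γ k * N < 1 * N := by
        apply mul_lt_mul_of_pos_right (hγmem k).2 hNpos
      have : (l:ℝ) < N := by linarith
      exact_mod_cast this.le
    -- upper bound
    have hupper : orderStat N (fun i => y i ω) l ≤ q k + ε' := by
      rw [TS.orderStat_le_iff N _ hl1 hlN]
      have h5 : γ k * N < ((List.ofFn fun i : Fin N => y i ω).countP
          (fun v => decide (v ≤ q k + ε')) : ℝ) := (lt_div_iff₀ hNpos).1 h1
      have : (l : ℝ) < _ := lt_of_le_of_lt hlr h5
      exact_mod_cast this.le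
    -- lower bound
    have hlower : q k - ε' < orderStat N (fun i => y i ω) l := by
      by_contra hcon
      push_neg at hcon
      rw [TS.orderStat_le_iff N _ hl1 hlN] at hcon
      have h5 : ((List.ofFn fun i : Fin N => y i ω).countP
          (fun v => decide (v ≤ q k - ε')) : ℝ) < (γ k - δ) * N := (div_lt_iff₀ hNpos).1 h2
      have h6 : γ k * N < l + 1 := Nat.lt_floor_add_one _
      have h7 : ((List.ofFn fun i : Fin N => y i ω).countP
          (fun v => decide (v ≤ q k - ε')) : ℝ) < l := by nlinarith
      exact absurd h7 (not_lt.2 (by exact_mod_cast hcon))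
    rw [hsq, Real.dist_eq, abs_sub_lt_iff]
    constructor <;> [skip; skip] <;> nlinarith [hupper, hlower, hm, hε'pos]
  have hdot : Continuous (fun v : Fin p → ℝ => βbar ⬝ᵥ v) := by
    unfold dotProduct
    exact continuous_finset_sum _ fun i _ => (continuous_const.mul (continuous_apply i))
  have hfinal := (hdot.tendsto _).comp ((hJ.tendsto _).comp hvec)
  rw [hident θ0 hθ0] at hfinal
  exact hfinal
end

section
/- Let $y_1, y_2, \ldots$ be i.i.d. real random variables with common cumulative distribution function $F$, where $F$ is continuous and has connected support. Fix $x \in \mathbb{R}$ with $0 < F(x) < 1$ and set $\gamma := F(x)$. Let $F_N$ denote the empirical cdf of the first $N$ samples and $F^{-1}(\gamma) := \inf\{t : F(t) \ge \gamma\}$ the quantile function. Then $y_{(\lfloor \gamma N \rfloor)} - F^{-1}\bigl(F_N(x)\bigr) \to 0$ almost surely as $N \to \infty$. -/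
open MeasureTheory ProbabilityTheory Filter Topology

/-- Empirical cdf at `x` of the first `N` values of `y`. -/
noncomputable def empCdf (N : ℕ) (y : ℕ → ℝ) (x : ℝ) : ℝ :=
  (∑ i ∈ Finset.range N, if y i ≤ x then (1 : ℝ) else 0) / N

lemma sorted_getD_le_iff {L : List ℝ} (hL : L.Pairwise (· ≤ ·)) {l : ℕ} (h1 : 1 ≤ l)
    (h2 : l ≤ L.length) {t : ℝ} :
    L.getD (l-1) 0 ≤ t ↔ l ≤ L.countP (fun a => decide (a ≤ t)) := by
  have hlt : l - 1 < L.length := by omega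
  rw [List.getD_eq_getElem L 0 hlt]
  constructor
  · intro h
    have key : (L.take l).countP (fun a => decide (a ≤ t)) = (L.take l).length := by
      rw [List.countP_eq_length]
      intro a ha
      obtain ⟨i, hi, rfl⟩ := List.mem_iff_getElem.1 ha
      have hi' : i < L.length := by simp at hi; omega
      have hil : i ≤ l - 1 := by simp at hi; omega
      have : L[i] ≤ L[l-1] := by
        rcases eq_or_lt_of_le hil with h' | h'
        · simp [h']
        · simpa using hL.rel_get_of_lt (a := ⟨i, hi'⟩) (b := ⟨l-1, hlt⟩) h'
      rw [List.getElem_take]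
      simpa using le_trans this h
    have := (List.take_sublist l L).countP_le (p := fun a => decide (a ≤ t))
    rw [key] at this
    simpa [List.length_take, min_eq_left h2] using this
  · intro h
    by_contra hgt
    push_neg at hgt
    have hsplit : L.countP (fun a => decide (a ≤ t)) =
        (L.take (l-1)).countP (fun a => decide (a ≤ t)) +
        (L.drop (l-1)).countP (fun a => decide (a ≤ t)) := by
      rw [← List.countP_append, List.take_append_drop]
    have hdrop : (L.drop (l-1)).countP (fun a => decide (a ≤ t)) = 0 := by
      rw [List.countP_eq_zero]
      intro a ha
      obtain ⟨j, hj, rfl⟩ := List.mem_iff_getElem.1 ha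
      have hj' : l - 1 + j < L.length := by simp at hj; omega
      rw [List.getElem_drop]
      have : L[l-1] ≤ L[l-1+j] := by
        rcases Nat.eq_zero_or_pos j with h' | h'
        · simp [h']
        · simpa using hL.rel_get_of_lt (a := ⟨l-1, hlt⟩) (b := ⟨l-1+j, hj'⟩) (by simp; omega)
      simp only [decide_eq_true_eq]
      push_neg
      exact lt_of_lt_of_le hgt this
    have htake : (L.take (l-1)).countP (fun a => decide (a ≤ t)) ≤ l - 1 :=
      (List.countP_le_length (p := _)).trans (by simp [List.length_take])
    omega

lemma sum_ite_eq_countP (N : ℕ) (y : ℕ → ℝ) (t : ℝ) :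
    (∑ i ∈ Finset.range N, if y i ≤ t then (1:ℝ) else 0)
      = ((List.ofFn fun i : Fin N => y i).countP fun a => decide (a ≤ t) : ℕ) := by
  induction N generalizing y with
  | zero => simp
  | succ n ih =>
    rw [List.ofFn_succ, List.countP_cons, Finset.sum_range_succ']
    push_cast
    rw [ih (fun i => y (i+1))]
    by_cases h : y 0 ≤ t <;> simp [h]

lemma orderStat_le_iff (N : ℕ) (y : ℕ → ℝ) (l : ℕ) (h1 : 1 ≤ l) (h2 : l ≤ N) (t : ℝ) :
    orderStat N y l ≤ t ↔ (l : ℝ) ≤ ∑ i ∈ Finset.range N, if y i ≤ t then (1:ℝ) else 0 := by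
  have hperm := List.perm_insertionSort (· ≤ ·) (List.ofFn fun i : Fin N => y i)
  have hlen : (List.insertionSort (· ≤ ·) (List.ofFn fun i : Fin N => y i)).length = N := by
    rw [hperm.length_eq, List.length_ofFn]
  rw [orderStat, sorted_getD_le_iff (List.pairwise_insertionSort _ _) h1 (by omega),
    hperm.countP_eq, sum_ite_eq_countP]
  exact_mod_cast Iff.rfl

lemma quantile_bounds {F : ℝ → ℝ} (hmono : Monotone F) {γ' a b : ℝ}
    (hb : γ' ≤ F b) (ha : F a < γ') : a ≤ quantile F γ' ∧ quantile F γ' ≤ b := by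
  have hlb : ∀ z ∈ {z : ℝ | γ' ≤ F z}, a ≤ z := by
    intro z hz
    by_contra h
    push_neg at h
    exact absurd (le_trans hz (hmono h.le)) (not_le.2 ha)
  exact ⟨le_csInf ⟨b, hb⟩ hlb, csInf_le ⟨a, hlb⟩ hb⟩

lemma empCdf_tendsto_ae {Ω : Type*} [MeasurableSpace Ω] (P : Measure Ω) [IsProbabilityMeasure P]
    (y : ℕ → Ω → ℝ) (F : ℝ → ℝ)
    (hmeas : ∀ i, Measurable (y i))
    (hindep : iIndepFun y P)
    (hcdf : ∀ i t, P {ω | y i ω ≤ t} = ENNReal.ofReal (F t)) (t : ℝ) :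
    ∀ᵐ ω ∂P, Tendsto (fun N => empCdf N (fun i => y i ω) t) atTop
      (𝓝 ((ENNReal.ofReal (F t)).toReal)) := by
  set g : ℝ → ℝ := fun s => if s ≤ t then (1:ℝ) else 0 with hg
  have hgm : Measurable g := Measurable.ite measurableSet_Iic measurable_const measurable_const
  set X : ℕ → Ω → ℝ := fun i ω => g (y i ω) with hX
  have hident : ∀ i, IdentDistrib (X i) (X 0) P P := by
    intro i
    have hmap : P.map (y i) = P.map (y 0) := by
      have h1 : IsProbabilityMeasure (P.map (y i)) := Measure.isProbabilityMeasure_map (hmeas i).aemeasurable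
      have h2 : IsProbabilityMeasure (P.map (y 0)) := Measure.isProbabilityMeasure_map (hmeas 0).aemeasurable
      refine Measure.ext_of_Iic _ _ (fun s => ?_)
      rw [Measure.map_apply (hmeas i) measurableSet_Iic,
        Measure.map_apply (hmeas 0) measurableSet_Iic]
      show P {ω | y i ω ≤ s} = P {ω | y 0 ω ≤ s}
      rw [hcdf i s, hcdf 0 s]
    exact IdentDistrib.comp ⟨(hmeas i).aemeasurable, (hmeas 0).aemeasurable, hmap⟩ hgm
  have hind : Pairwise (Function.onFun (IndepFun · · P) X) := fun i j hij =>
    (hindep.indepFun hij).comp hgm hgm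
  have hXeq : X 0 = Set.indicator ((y 0) ⁻¹' Set.Iic t) (fun _ => (1:ℝ)) := by
    ext ω; by_cases h : y 0 ω ≤ t <;> simp [hX, hg, h, Set.indicator, Set.mem_Iic]
  have hms : MeasurableSet ((y 0) ⁻¹' Set.Iic t) := (hmeas 0) measurableSet_Iic
  have hint : Integrable (X 0) P := by
    rw [hXeq]; exact (integrable_const (1:ℝ)).indicator hms
  have hexp : P[X 0] = (ENNReal.ofReal (F t)).toReal := by
    rw [hXeq, integral_indicator_const _ hms]
    have : (y 0) ⁻¹' Set.Iic t = {ω | y 0 ω ≤ t} := rfl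
    rw [this, measureReal_def, hcdf 0 t]; simp
  have := strong_law_ae_real X hint hind hident
  rw [hexp] at this
  filter_upwards [this] with ω hω
  exact hω

/-- The sample quantile and the quantile transform of the empirical cdf are almost surely
asymptotically equivalent: for i.i.d. data with a continuous cdf `F` of connected support,
`x` with `γ := F x ∈ (0,1)`, one has `y_(⌊γN⌋) - F⁻¹(F_N(x)) → 0` almost surely. -/
theorem orderStat_sub_quantile_empCdf_tendsto_zero_ae
    {Ω : Type*} [MeasurableSpace Ω] (P : Measure Ω) [IsProbabilityMeasure P]
    (y : ℕ → Ω → ℝ) (F : ℝ → ℝ)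
    (hmeas : ∀ i, Measurable (y i))
    (hindep : iIndepFun y P)
    (hcdf : ∀ i t, P {ω | y i ω ≤ t} = ENNReal.ofReal (F t))
    (hmono : Monotone F) (hcont : Continuous F)
    (hconn : ∀ γ ∈ Set.Ioo (0 : ℝ) 1, ∀ ε > 0,
      γ < F (quantile F γ + ε) ∧ F (quantile F γ - ε) < γ)
    (x : ℝ) (hx0 : 0 < F x) (hx1 : F x < 1) :
    ∀ᵐ ω ∂P,
      Tendsto
        (fun N : ℕ =>
          orderStat N (fun i => y i ω) ⌊F x * N⌋₊ -
            quantile F (empCdf N (fun i => y i ω) x))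
        atTop (𝓝 0) := by
  set γ := F x with hγdef
  set q := quantile F γ with hqdef
  have hγIoo : γ ∈ Set.Ioo (0:ℝ) 1 := ⟨hx0, hx1⟩
  set tp : ℕ → ℝ := fun k => q + 1/(k+1) with htp
  set tm : ℕ → ℝ := fun k => q - 1/(k+1) with htm
  have hεpos : ∀ k : ℕ, (0:ℝ) < 1/(k+1) := fun k => by positivity
  have hFp : ∀ k, γ < F (tp k) := fun k => (hconn γ hγIoo _ (hεpos k)).1
  have hFm : ∀ k, F (tm k) < γ := fun k => (hconn γ hγIoo _ (hεpos k)).2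
  have h0 := empCdf_tendsto_ae P y F hmeas hindep hcdf x
  rw [show ((ENNReal.ofReal (F x)).toReal) = γ from ENNReal.toReal_ofReal hx0.le] at h0
  have hp := fun k => empCdf_tendsto_ae P y F hmeas hindep hcdf (tp k)
  have hm := fun k => empCdf_tendsto_ae P y F hmeas hindep hcdf (tm k)
  filter_upwards [h0, ae_all_iff.2 hp, ae_all_iff.2 hm] with ω h0ω hpω hmω
  have hpω' : ∀ k, Tendsto (fun N => empCdf N (fun i => y i ω) (tp k)) atTop (𝓝 (F (tp k))) := by
    intro k
    have := hpω k
    rwa [ENNReal.toReal_ofReal (le_of_lt (lt_trans hx0 (hFp k)))] at this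
  have hmlim : ∀ k, (ENNReal.ofReal (F (tm k))).toReal < γ := by
    intro k
    rw [ENNReal.toReal_ofReal']
    exact max_lt (hFm k) hx0
  -- eventual facts about l = ⌊γ N⌋
  have hγN : Tendsto (fun N : ℕ => γ * N) atTop atTop :=
    Tendsto.const_mul_atTop hx0 tendsto_natCast_atTop_atTop
  have hev3 : ∀ᶠ N : ℕ in atTop, (1:ℝ) ≤ γ * N := hγN.eventually_ge_atTop 1
  have hlfacts : ∀ᶠ N : ℕ in atTop, 1 ≤ ⌊γ * (N:ℝ)⌋₊ ∧ ⌊γ * (N:ℝ)⌋₊ ≤ N := by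
    filter_upwards [hev3] with N h3
    constructor
    · exact Nat.le_floor (by exact_mod_cast h3)
    · calc ⌊γ * (N:ℝ)⌋₊ ≤ ⌊(N:ℝ)⌋₊ := Nat.floor_le_floor (by nlinarith [Nat.cast_nonneg (α := ℝ) N])
        _ = N := Nat.floor_natCast N
  -- order statistic tends to q
  have hOS : Tendsto (fun N : ℕ => orderStat N (fun i => y i ω) ⌊γ * N⌋₊) atTop (𝓝 q) := by
    rw [tendsto_order]
    constructor
    · intro a ha
      obtain ⟨k, hk⟩ := exists_nat_one_div_lt (show (0:ℝ) < q - a by linarith)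
      have hatm : a < tm k := by rw [htm]; simp only []; linarith
      set d := (ENNReal.ofReal (F (tm k))).toReal with hd
      have hdγ : d < γ := hmlim k
      have hδ : 0 < (γ - d)/2 := by linarith
      have hmω' : Tendsto (fun N => empCdf N (fun i => y i ω) (tm k)) atTop (𝓝 d) := hmω k
      have hev1 : ∀ᶠ N in atTop, empCdf N (fun i => y i ω) (tm k) < γ - (γ - d)/2 :=
        hmω'.eventually_lt_const (by linarith)
      have hev2 : ∀ᶠ N : ℕ in atTop, (1:ℝ) ≤ (γ - d)/2 * N :=
        (Tendsto.const_mul_atTop hδ tendsto_natCast_atTop_atTop).eventually_ge_atTop 1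
      filter_upwards [hev1, hev2, hlfacts, eventually_ge_atTop 1] with N h1 h2 hl hN1
      have hNpos : (0:ℝ) < N := by exact_mod_cast hN1
      have hcount : (∑ i ∈ Finset.range N, if y i ω ≤ tm k then (1:ℝ) else 0)
          < (⌊γ * (N:ℝ)⌋₊ : ℝ) := by
        have hsum : (∑ i ∈ Finset.range N, if y i ω ≤ tm k then (1:ℝ) else 0)
            = empCdf N (fun i => y i ω) (tm k) * N := by
          rw [empCdf, div_mul_cancel₀ _ (ne_of_gt hNpos)]
        have hfl : γ * N - 1 < (⌊γ * (N:ℝ)⌋₊ : ℝ) := Nat.sub_one_lt_floor _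
        rw [hsum]
        nlinarith
      have hnot := (orderStat_le_iff N (fun i => y i ω) ⌊γ * (N:ℝ)⌋₊ hl.1 hl.2 (tm k)).not
      have : ¬ orderStat N (fun i => y i ω) ⌊γ * (N:ℝ)⌋₊ ≤ tm k := hnot.2 (not_le.2 hcount)
      push_neg at this
      exact lt_trans hatm this
    · intro a ha
      obtain ⟨k, hk⟩ := exists_nat_one_div_lt (show (0:ℝ) < a - q by linarith)
      have hatp : tp k < a := by rw [htp]; simp only []; linarith
      have hev1 : ∀ᶠ N in atTop, γ < empCdf N (fun i => y i ω) (tp k) :=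
        (hpω' k).eventually_const_lt (hFp k)
      filter_upwards [hev1, hlfacts, eventually_ge_atTop 1] with N h1 hl hN1
      have hNpos : (0:ℝ) < N := by exact_mod_cast hN1
      have hcount : ((⌊γ * (N:ℝ)⌋₊ : ℝ))
          ≤ ∑ i ∈ Finset.range N, if y i ω ≤ tp k then (1:ℝ) else 0 := by
        have hsum : (∑ i ∈ Finset.range N, if y i ω ≤ tp k then (1:ℝ) else 0)
            = empCdf N (fun i => y i ω) (tp k) * N := by
          rw [empCdf, div_mul_cancel₀ _ (ne_of_gt hNpos)]
        have hfl : (⌊γ * (N:ℝ)⌋₊ : ℝ) ≤ γ * N := Nat.floor_le (by positivity)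
        rw [hsum]
        nlinarith
      have := (orderStat_le_iff N (fun i => y i ω) ⌊γ * (N:ℝ)⌋₊ hl.1 hl.2 (tp k)).2 hcount
      exact lt_of_le_of_lt this hatp
  -- quantile of empirical cdf tends to q
  have hQ : Tendsto (fun N : ℕ => quantile F (empCdf N (fun i => y i ω) x)) atTop (𝓝 q) := by
    rw [tendsto_order]
    constructor
    · intro a ha
      obtain ⟨k, hk⟩ := exists_nat_one_div_lt (show (0:ℝ) < q - a by linarith)
      have hatm : a < tm k := by rw [htm]; simp only []; linarith
      have hev1 : ∀ᶠ N in atTop, F (tm k) < empCdf N (fun i => y i ω) x :=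
        h0ω.eventually_const_lt (hFm k)
      have hev2 : ∀ᶠ N in atTop, empCdf N (fun i => y i ω) x < F (tp 0) :=
        h0ω.eventually_lt_const (hFp 0)
      filter_upwards [hev1, hev2] with N h1 h2
      exact lt_of_lt_of_le hatm (quantile_bounds hmono h2.le h1).1
    · intro a ha
      obtain ⟨k, hk⟩ := exists_nat_one_div_lt (show (0:ℝ) < a - q by linarith)
      have hatp : tp k < a := by rw [htp]; simp only []; linarith
      have hev1 : ∀ᶠ N in atTop, empCdf N (fun i => y i ω) x < F (tp k) :=
        h0ω.eventually_lt_const (hFp k)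
      have hev2 : ∀ᶠ N in atTop, F (tm 0) < empCdf N (fun i => y i ω) x :=
        h0ω.eventually_const_lt (hFm 0)
      filter_upwards [hev1, hev2] with N h1 h2
      exact lt_of_le_of_lt (quantile_bounds hmono h1.le h2).2 hatp
  have := hOS.sub hQ
  simpa using this
end
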